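/- For integers p ≥ q ≥ r ≥ 0, there is the identity P_p^{q−r} P_r^{p−q} − P_q^{p−r} = Σ_{i=r+1}^{q} Σ_{k=q}^{p−1} (P_{i−1}P_{k+1} − P_i P_k) · P_{i−1}^{k−q} P_i^{p−k−1} P_p^{q−i} P_q^{i−1−r} in ℝ[x₁,…,xₙ]. -/
import Mathlib


open Finset MvPolynomial

/-- The normalized `m`-th power sum `P_m = (1/n) Σ_j x_j^m`. -/
noncomputable def psum (n : ℕ) (m : ℕ) : MvPolynomial (Fin n) ℝ :=
  ((n : ℝ))⁻¹ • ∑ j, X j ^ m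

private lemma inner_telescope {R : Type*} [CommRing R] (P : ℕ → R) (A B : R) (q m : ℕ) :
    ∑ k ∈ Finset.range m, (A * P (q + k + 1) - B * P (q + k)) * (A ^ k * B ^ (m - k - 1)) =
      A ^ m * P (q + m) - B ^ m * P q := by
  calc ∑ k ∈ Finset.range m, (A * P (q + k + 1) - B * P (q + k)) * (A ^ k * B ^ (m - k - 1))
      = ∑ j ∈ Finset.range m,
          (A ^ (j + 1) * B ^ (m - (j + 1)) * P (q + (j + 1))
            - A ^ j * B ^ (m - j) * P (q + j)) := by
        refine Finset.sum_congr rfl fun j hj => ?_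
        have hj' : j < m := Finset.mem_range.mp hj
        obtain ⟨c, hc⟩ : ∃ c, m - j = c + 1 := ⟨m - j - 1, by omega⟩
        rw [show m - (j + 1) = c from by omega, show m - j - 1 = c from by omega, hc,
          pow_succ]
        ring_nf
    _ = A ^ m * B ^ (m - m) * P (q + m) - A ^ 0 * B ^ (m - 0) * P (q + 0) :=
        Finset.sum_range_sub (fun j => A ^ j * B ^ (m - j) * P (q + j)) m
    _ = A ^ m * P (q + m) - B ^ m * P q := by simp

private lemma key {R : Type*} [CommRing R] (P : ℕ → R) (r q p : ℕ) (hrq : r ≤ q) (hqp : q ≤ p) :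
    ∑ b ∈ Finset.range (q - r), ∑ k ∈ Finset.range (p - q),
      (P (r + b) * P (q + k + 1) - P (r + b + 1) * P (q + k)) *
        (P (r + b) ^ k * P (r + b + 1) ^ (p - q - k - 1) * P p ^ (q - r - 1 - b) * P q ^ b)
    = P p ^ (q - r) * P r ^ (p - q) - P q ^ (p - r) := by
  set m := p - q with hm
  set s := q - r with hs
  have hp : q + m = p := by omega
  have hq : r + s = q := by omega
  have step1 : ∀ b ∈ Finset.range s,
      ∑ k ∈ Finset.range m,
        (P (r + b) * P (q + k + 1) - P (r + b + 1) * P (q + k)) *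
          (P (r + b) ^ k * P (r + b + 1) ^ (m - k - 1) * P p ^ (s - 1 - b) * P q ^ b)
      = (P (r + b) ^ m * P p - P (r + b + 1) ^ m * P q) * (P p ^ (s - 1 - b) * P q ^ b) := by
    intro b _
    have := inner_telescope P (P (r + b)) (P (r + b + 1)) q m
    calc ∑ k ∈ Finset.range m,
        (P (r + b) * P (q + k + 1) - P (r + b + 1) * P (q + k)) *
          (P (r + b) ^ k * P (r + b + 1) ^ (m - k - 1) * P p ^ (s - 1 - b) * P q ^ b)
        = (∑ k ∈ Finset.range m,
            (P (r + b) * P (q + k + 1) - P (r + b + 1) * P (q + k)) *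
              (P (r + b) ^ k * P (r + b + 1) ^ (m - k - 1))) * (P p ^ (s - 1 - b) * P q ^ b) := by
          rw [Finset.sum_mul]; exact Finset.sum_congr rfl fun k _ => by ring
      _ = (P (r + b) ^ m * P p - P (r + b + 1) ^ m * P q) * (P p ^ (s - 1 - b) * P q ^ b) := by
          rw [this, hp]
  rw [Finset.sum_congr rfl step1]
  calc ∑ b ∈ Finset.range s,
        (P (r + b) ^ m * P p - P (r + b + 1) ^ m * P q) * (P p ^ (s - 1 - b) * P q ^ b)
      = ∑ b ∈ Finset.range s,
          (P (r + b) ^ m * P p ^ (s - b) * P q ^ b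
            - P (r + (b + 1)) ^ m * P p ^ (s - (b + 1)) * P q ^ (b + 1)) := by
        refine Finset.sum_congr rfl fun b hb => ?_
        have hb' : b < s := Finset.mem_range.mp hb
        obtain ⟨c, hc⟩ : ∃ c, s - b = c + 1 := ⟨s - b - 1, by omega⟩
        rw [show s - (b + 1) = c from by omega, show s - 1 - b = c from by omega, hc,
          show r + (b + 1) = r + b + 1 from by omega, pow_succ]
        ring
    _ = P (r + 0) ^ m * P p ^ (s - 0) * P q ^ 0
          - P (r + s) ^ m * P p ^ (s - s) * P q ^ s :=
        Finset.sum_range_sub' (fun b => P (r + b) ^ m * P p ^ (s - b) * P q ^ b) s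
    _ = P p ^ s * P r ^ m - P q ^ (p - r) := by
        simp only [Nat.add_zero, Nat.sub_zero, pow_zero, mul_one, Nat.sub_self, hq]
        rw [← pow_add]
        have : m + s = p - r := by omega
        rw [this]
        ring

theorem lyapunov_identity (n p q r : ℕ) (hqp : q ≤ p) (hrq : r ≤ q) :
    psum n p ^ (q - r) * psum n r ^ (p - q) - psum n q ^ (p - r) =
      ∑ i ∈ Finset.Icc (r + 1) q, ∑ k ∈ Finset.Icc q (p - 1),
        (psum n (i - 1) * psum n (k + 1) - psum n i * psum n k) *
          (psum n (i - 1) ^ (k - q) * psum n i ^ (p - k - 1) *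
           psum n p ^ (q - i) * psum n q ^ (i - 1 - r)) := by
  rcases Nat.eq_zero_or_pos q with hq0 | hq1
  · subst hq0
    have hr : r = 0 := Nat.le_zero.mp hrq
    subst hr
    rw [Finset.Icc_eq_empty (by omega)]
    simp
  · have hp1 : 1 ≤ p := le_trans hq1 hqp
    have hIcc : Finset.Icc q (p - 1) = Finset.Ico q p := by
      ext x; simp only [Finset.mem_Icc, Finset.mem_Ico]; omega
    have hIcc2 : Finset.Icc (r + 1) q = Finset.Ico (r + 1) (q + 1) := (Finset.Ico_add_one_right_eq_Icc _ _).symm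
    rw [hIcc, hIcc2, Finset.sum_Ico_eq_sum_range]
    have hsub : q + 1 - (r + 1) = q - r := by omega
    rw [hsub, ← key (psum n) r q p hrq hqp]
    refine Finset.sum_congr rfl fun b _ => ?_
    rw [Finset.sum_Ico_eq_sum_range]
    refine Finset.sum_congr rfl fun k _ => ?_
    simp only [show r + 1 + b - 1 = r + b from by omega,
      show r + b + 1 - 1 = r + b from by omega,
      show q + k - q = k from by omega,
      show p - (q + k) - 1 = p - q - k - 1 from by omega,
      show q - (r + 1 + b) = q - r - 1 - b from by omega,
      show q - (r + b + 1) = q - r - 1 - b from by omega,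
      show r + b - r = b from by omega,
      show r + 1 + b = r + b + 1 from by omega]
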